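/- arXiv:1106.2583 — 3 statements merged into one kernel-verified Lean document; each statement's English description precedes it below -/
import Mathlib

section
/- Fix n ≥ 2 and a positive integer N. The map sending γ ∈ GL(n, ℤ) to its last column induces a bijection between the cosets γ(Γ̃ ∩ P̃)\ for γ ∈ Γ̃ (i.e. the quotient Γ̃/(Γ̃ ∩ P̃)) and the set of primitive integer vectors v = (v_1, …, v_n) ∈ ℤ^n (gcd(v_1,…,v_n) = 1) satisfying N | v_1, …, N | v_{n-1}, taken modulo ±1; here Γ̃ = Γ̃_0(N) = {γ ∈ GL(n,ℤ) : γ_{i1} ≡ 0 mod N for i ≥ 2} and P̃ is the subgroup of GL(n,ℤ) of matrices whose last column is (0,…,0,±1)ᵗ. -/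
open Matrix Finset

-- Bezout for Finset.gcd over ℤ
theorem exists_sum_eq_gcd {ι : Type*} [DecidableEq ι] (s : Finset ι) (v : ι → ℤ) :
    ∃ c : ι → ℤ, ∑ i ∈ s, c i * v i = s.gcd v := by
  induction s using Finset.induction_on with
  | empty => exact ⟨0, by simp⟩
  | @insert a s ha ih =>
    obtain ⟨c, hc⟩ := ih
    refine ⟨fun i => if i = a then Int.gcdA (v a) (s.gcd v)
      else Int.gcdB (v a) (s.gcd v) * c i, ?_⟩
    rw [Finset.sum_insert ha, Finset.gcd_insert]
    have : ∀ i ∈ s, (if i = a then Int.gcdA (v a) (s.gcd v)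
        else Int.gcdB (v a) (s.gcd v) * c i) * v i
        = Int.gcdB (v a) (s.gcd v) * (c i * v i) := by
      intro i hi
      rw [if_neg (by rintro rfl; exact ha hi), mul_assoc]
    rw [Finset.sum_congr rfl this, ← Finset.mul_sum, hc]; simp only [if_pos rfl]
    have hb := Int.gcd_eq_gcd_ab (v a) (s.gcd v)
    have : (GCDMonoid.gcd (v a) (s.gcd v)) = (Int.gcd (v a) (s.gcd v) : ℤ) := by
      rw [Int.coe_gcd]
    rw [this, hb]; simp; ring

theorem exists_unit_matrix_col (m : ℕ) (v : Fin m → ℤ)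
    (hv : Finset.univ.gcd v = 1) (k : Fin m) :
    ∃ u : (Matrix (Fin m) (Fin m) ℤ)ˣ, ∀ i, (u : Matrix (Fin m) (Fin m) ℤ) i k = v i := by
  obtain ⟨c, hc⟩ := exists_sum_eq_gcd Finset.univ v
  rw [hv] at hc
  let f : (Fin m → ℤ) →ₗ[ℤ] ℤ := ∑ i : Fin m, c i • LinearMap.proj i
  have hf : ∀ x, f x = ∑ i, c i * x i := by
    intro x
    simp [f, LinearMap.sum_apply, LinearMap.proj_apply]
  have hfv : f v = 1 := by rw [hf]; exact hc
  set K := LinearMap.ker f with hK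
  have hmem : ∀ x : Fin m → ℤ, x - f x • v ∈ K := by
    intro x
    rw [hK, LinearMap.mem_ker, map_sub, _root_.map_smul, hfv, smul_eq_mul, mul_one, sub_self]
  let e : (Fin m → ℤ) ≃ₗ[ℤ] ℤ × K :=
    { toFun := fun x => (f x, ⟨x - f x • v, hmem x⟩)
      invFun := fun p => p.1 • v + (p.2 : Fin m → ℤ)
      map_add' := by
        intro x y
        refine Prod.ext (map_add f x y) (Subtype.ext ?_)
        show x + y - f (x + y) • v = (x - f x • v) + (y - f y • v)
        rw [map_add, add_smul]; abel
      map_smul' := by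
        intro r x
        refine Prod.ext (_root_.map_smul f r x) (Subtype.ext ?_)
        show r • x - f (r • x) • v = r • (x - f x • v)
        rw [_root_.map_smul, smul_sub, smul_eq_mul, mul_smul]
      left_inv := by
        intro x
        show f x • v + (x - f x • v) = x
        abel
      right_inv := by
        rintro ⟨a, ⟨kk, hk⟩⟩
        have hfk : f kk = 0 := hk
        refine Prod.ext ?_ (Subtype.ext ?_)
        · show f (a • v + kk) = a
          rw [map_add, _root_.map_smul, hfv, hfk, smul_eq_mul, mul_one, add_zero]
        · show a • v + kk - f (a • v + kk) • v = kk
          rw [map_add, _root_.map_smul, hfv, hfk, smul_eq_mul, mul_one, add_zero]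
          abel }
  haveI : Module.Finite ℤ K := Module.Finite.iff_fg.mpr (IsNoetherian.noetherian K)
  haveI : Module.Free ℤ K := Module.free_of_finite_type_torsion_free'
  let ι := Module.Free.ChooseBasisIndex ℤ K
  let bK : Module.Basis ι ℤ K := Module.Free.chooseBasis ℤ K
  let b : Module.Basis (Fin 1 ⊕ ι) ℤ (Fin m → ℤ) := ((Module.Basis.singleton (Fin 1) ℤ).prod bK).map e.symm
  have hb : b (Sum.inl 0) = v := by
    have h1 : ((Module.Basis.singleton (Fin 1) ℤ).prod bK) (Sum.inl 0) = ((1 : ℤ), (0 : K)) := by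
      ext
      · simp [Module.Basis.prod_apply_inl_fst]
      · simp [Module.Basis.prod_apply_inl_snd]
    rw [Module.Basis.map_apply, h1]
    show (1 : ℤ) • v + ((0 : K) : Fin m → ℤ) = v
    rw [one_smul]
    simp
  let σ0 : (Fin 1 ⊕ ι) ≃ Fin m := b.indexEquiv (Pi.basisFun ℤ (Fin m))
  let σ : Fin m ≃ (Fin 1 ⊕ ι) := (Equiv.swap k (σ0 (Sum.inl 0))).trans σ0.symm
  have hσ : σ k = Sum.inl 0 := by
    simp [σ, Equiv.swap_apply_left]
  let b' : Module.Basis (Fin m) ℤ (Fin m → ℤ) := b.reindex σ.symm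
  have hb' : b' k = v := by
    rw [Module.Basis.reindex_apply, Equiv.symm_symm, hσ, hb]
  let M := (Pi.basisFun ℤ (Fin m)).toMatrix b'
  haveI := (Pi.basisFun ℤ (Fin m)).invertibleToMatrix b'
  refine ⟨unitOfInvertible M, fun i => ?_⟩
  show M i k = v i
  simp only [M, Module.Basis.toMatrix_apply, Pi.basisFun_repr]
  rw [hb']

theorem exists_coprime_arith (a b n : ℤ) (hb : b ≠ 0)
    (h : Int.gcd (Int.gcd a b : ℤ) n = 1) : ∃ t : ℤ, Int.gcd (a + n * t) b = 1 := by
  classical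
  let s : Finset ℕ := b.natAbs.primeFactors.filter (fun p => ¬ (p : ℤ) ∣ a)
  refine ⟨(∏ p ∈ s, p : ℕ), ?_⟩
  by_contra hg
  have hg0 : Int.gcd (a + n * (∏ p ∈ s, p : ℕ)) b ≠ 0 := by
    intro h0
    exact hb (Int.gcd_eq_zero_iff.mp h0).2
  obtain ⟨p, hp, hpd⟩ := Nat.exists_prime_and_dvd hg
  have hpa : (p : ℤ) ∣ a + n * (∏ p ∈ s, p : ℕ) :=
    dvd_trans (Int.natCast_dvd_natCast.mpr hpd) (Int.gcd_dvd_left _ _)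
  have hpb : (p : ℤ) ∣ b :=
    dvd_trans (Int.natCast_dvd_natCast.mpr hpd) (Int.gcd_dvd_right _ _)
  by_cases hdva : (p : ℤ) ∣ a
  · -- p ∣ a: then p ∣ n * t; p ∤ t, so p ∣ n, contradiction with h
    have hnt : (p : ℤ) ∣ n * (∏ p ∈ s, p : ℕ) := (dvd_add_right hdva).mp hpa
    have hpt : ¬ (p : ℤ) ∣ (∏ p ∈ s, p : ℕ) := by
      intro hdt
      have : p ∣ ∏ q ∈ s, q := Int.ofNat_dvd.mp (by exact_mod_cast hdt)
      obtain ⟨q, hq, hpq⟩ := (Nat.Prime.prime hp).exists_mem_finset_dvd this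
      have hq' := Finset.mem_filter.mp hq
      have : p = q := ((Nat.prime_dvd_prime_iff_eq hp
        (Nat.prime_of_mem_primeFactors hq'.1)).mp hpq)
      exact hq'.2 (this ▸ hdva)
    have hpn : (p : ℤ) ∣ n := by
      rcases (Int.Prime.dvd_mul' hp hnt) with h1 | h1
      · exact h1
      · exact absurd h1 hpt
    have h1 : (p : ℤ) ∣ (Int.gcd a b : ℤ) := Int.dvd_coe_gcd hdva hpb
    have h2 : (p : ℤ) ∣ ((Int.gcd (Int.gcd a b : ℤ) n : ℕ) : ℤ) := Int.dvd_coe_gcd h1 hpn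
    rw [h] at h2
    have h3 : p ∣ 1 := by exact_mod_cast h2
    have := hp.one_lt
    have := Nat.le_of_dvd one_pos h3
    omega
  · -- p ∤ a: then p ∈ s, p ∣ t, so p ∣ a, contradiction
    have hpbn : p ∣ b.natAbs := by
      have := Int.natAbs_dvd_natAbs.mpr hpb
      simpa using this
    have hps : p ∈ s := Finset.mem_filter.mpr
      ⟨Nat.mem_primeFactors.mpr ⟨hp, hpbn, Int.natAbs_ne_zero.mpr hb⟩, hdva⟩
    have hpt : (p : ℤ) ∣ (∏ p ∈ s, p : ℕ) := Int.natCast_dvd_natCast.mpr (Finset.dvd_prod_of_mem _ hps)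
    have : (p : ℤ) ∣ a := by
      have := dvd_sub hpa (Dvd.dvd.mul_left hpt n)
      simpa using this
    exact hdva this

theorem colzero_mul {κ : Type*} [Fintype κ] [DecidableEq κ] {R : Type*} [CommRing R]
    (X Y : Matrix κ κ R) (k : κ) (hX : ∀ i, i ≠ k → X i k = 0) (hY : ∀ i, i ≠ k → Y i k = 0) :
    ∀ i, i ≠ k → (X * Y) i k = 0 := by
  intro i hik
  rw [Matrix.mul_apply]
  rw [Finset.sum_eq_single k (fun j _ hj => by rw [hY j hj, mul_zero]) (by simp)]
  rw [hX i hik, zero_mul]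

theorem colzero_inv {κ : Type*} [Fintype κ] [DecidableEq κ] {R : Type*} [CommRing R]
    (A B : Matrix κ κ R) (k : κ) (hBA : B * A = 1)
    (hA : ∀ i, i ≠ k → A i k = 0) : ∀ i, i ≠ k → B i k = 0 := by
  have h1 : ∀ i, (B * A) i k = B i k * A k k := by
    intro i
    rw [Matrix.mul_apply]
    exact Finset.sum_eq_single k (fun j _ hj => by rw [hA j hj, mul_zero]) (by simp)
  have hkk : B k k * A k k = 1 := by
    have := h1 k; rw [hBA] at this; simpa [Matrix.one_apply] using this.symm
  intro i hik
  have h0 : B i k * A k k = 0 := by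
    have := h1 i; rw [hBA] at this; simpa [Matrix.one_apply, hik] using this.symm
  have : B i k = B i k * (A k k * B k k) := by rw [mul_comm (A k k), hkk, mul_one]
  rw [this, ← mul_assoc, h0, zero_mul]


theorem part2 (N m : ℕ) (hN : 0 < N) (hm : 1 ≤ m) (v : Fin (m+1) → ℤ)
    (hv : Finset.univ.gcd v = 1)
    (hdvd : ∀ i : Fin (m+1), (i : ℕ) ≠ m + 1 - 1 → (N : ℤ) ∣ v i) :
    ∃ γ : (Matrix (Fin (m+1)) (Fin (m+1)) ℤ)ˣ,
      (∀ i : Fin (m+1), 1 ≤ (i : ℕ) → (N : ℤ) ∣ γ.val i 0) ∧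
      (∀ i, γ.val i (Fin.last m) = v i) := by
  classical
  haveI : NeZero m := ⟨by omega⟩
  set lst : Fin (m+1) := Fin.last m with hlst
  obtain ⟨γ0, hγ0⟩ := exists_unit_matrix_col (m+1) v hv lst
  set A : Matrix (Fin (m+1)) (Fin (m+1)) ℤ := γ0.val with hA
  set D : Matrix (Fin (m+1)) (Fin (m+1)) ℤ := (γ0⁻¹).val with hD
  have hAD : A * D = 1 := by rw [hA, hD, ← Units.val_mul, mul_inv_cancel γ0, Units.val_one]
  set d : Fin (m+1) → ℤ := fun j => D j 0 with hd
  have hfact : ∀ e : ℤ, (∀ i : Fin m, e ∣ d i.castSucc) → e ∣ (N : ℤ) → e ∣ 1 := by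
    intro e he heN
    have h00 : ∑ j, A 0 j * d j = 1 := by
      have := congrFun (congrFun hAD 0) 0
      rw [Matrix.mul_apply] at this
      rw [show (∑ j, A 0 j * d j) = ∑ j, A 0 j * D j 0 from rfl, this, Matrix.one_apply_eq]
    rw [Fin.sum_univ_castSucc] at h00
    rw [← h00]
    apply dvd_add
    · exact Finset.dvd_sum (fun j _ => Dvd.dvd.mul_left (he j) _)
    · have hv0 : (N : ℤ) ∣ v 0 := hdvd 0 (by simp; omega)
      have hAl : A 0 lst = v 0 := hγ0 0
      rw [hAl]
      exact Dvd.dvd.mul_right (dvd_trans heN hv0) _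
  -- construct lam, z with gcd condition
  set G : ℤ := ((Finset.univ.erase (0 : Fin m)).gcd (fun i => d (Fin.castSucc i))) with hG
  have hdecomp : ∀ g : Fin m → ℤ, Finset.univ.gcd g
      = GCDMonoid.gcd (g 0) ((Finset.univ.erase (0 : Fin m)).gcd g) := by
    intro g
    conv_lhs => rw [← Finset.insert_erase (Finset.mem_univ (0 : Fin m))]
    rw [Finset.gcd_insert]
  obtain ⟨lam, z, hwgcd⟩ : ∃ (lam : ℤ) (z : Fin (m+1) → ℤ),
      Finset.univ.gcd (fun i : Fin m =>
        lam * d i.castSucc + (N : ℤ) * z i.castSucc) = 1 := by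
    by_cases hG0 : G = 0
    · have hzero : ∀ i : Fin m, i ∈ Finset.univ.erase (0 : Fin m) → d i.castSucc = 0 :=
        fun i hi => Finset.gcd_eq_zero_iff.mp hG0 i hi
      have hg1 : Int.gcd (d (Fin.castSucc (0 : Fin m))) N = 1 := by
        have h2 := hfact ((Int.gcd (d (Fin.castSucc (0 : Fin m))) N : ℕ) : ℤ) ?_ ?_
        · have h3 : (Int.gcd (d (Fin.castSucc (0 : Fin m))) N : ℕ) ∣ 1 := by
            exact_mod_cast h2
          exact Nat.dvd_one.mp h3
        · intro i
          by_cases hi : i = 0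
          · subst hi; exact Int.gcd_dvd_left _ _
          · rw [hzero i (Finset.mem_erase.mpr ⟨hi, Finset.mem_univ i⟩)]
            exact dvd_zero _
        · exact Int.gcd_dvd_right _ _
      refine ⟨Int.gcdA (d (Fin.castSucc (0 : Fin m))) N,
        fun j => if j = (0 : Fin (m+1)) then Int.gcdB (d (Fin.castSucc (0 : Fin m))) N else 0, ?_⟩
      rw [hdecomp]
      have hf0 : Int.gcdA (d (Fin.castSucc (0 : Fin m))) N * d (Fin.castSucc (0 : Fin m))
          + (N : ℤ) * (if Fin.castSucc (0 : Fin m) = (0 : Fin (m+1))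
            then Int.gcdB (d (Fin.castSucc (0 : Fin m))) N else 0) = 1 := by
        rw [if_pos (by simp)]
        have hb := Int.gcd_eq_gcd_ab (d (Fin.castSucc (0 : Fin m))) N
        rw [hg1] at hb
        rw [show ((1:ℕ):ℤ) = 1 from rfl] at hb
        rw [hb]; ring
      rw [hf0]
      have herase : (Finset.univ.erase (0 : Fin m)).gcd (fun i : Fin m =>
          Int.gcdA (d (Fin.castSucc (0 : Fin m))) N * d i.castSucc
          + (N : ℤ) * (if i.castSucc = (0 : Fin (m+1))
            then Int.gcdB (d (Fin.castSucc (0 : Fin m))) N else 0)) = 0 := by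
        apply Finset.gcd_eq_zero_iff.mpr
        intro i hi
        have hine : i ≠ 0 := (Finset.mem_erase.mp hi).1
        rw [hzero i hi, if_neg (by
          intro hcs
          exact hine (Fin.ext (by simpa using congrArg Fin.val hcs)))]
        ring
      rw [herase]
      simp
    · have h1 : Int.gcd ((Int.gcd (d (Fin.castSucc (0 : Fin m))) G : ℕ) : ℤ) N = 1 := by
        have h2 := hfact ((Int.gcd ((Int.gcd (d (Fin.castSucc (0 : Fin m))) G : ℕ) : ℤ) N : ℕ) : ℤ) ?_ ?_
        · have h3 : (Int.gcd ((Int.gcd (d (Fin.castSucc (0 : Fin m))) G : ℕ) : ℤ) N : ℕ) ∣ 1 := by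
            exact_mod_cast h2
          exact Nat.dvd_one.mp h3
        · intro i
          by_cases hi : i = 0
          · subst hi
            exact dvd_trans (dvd_trans (Int.gcd_dvd_left _ _) (Int.gcd_dvd_left _ _)) dvd_rfl
          · refine dvd_trans (dvd_trans (Int.gcd_dvd_left _ _) (Int.gcd_dvd_right _ _)) ?_
            exact Finset.gcd_dvd (Finset.mem_erase.mpr ⟨hi, Finset.mem_univ i⟩)
        · exact Int.gcd_dvd_right _ _
      obtain ⟨t, ht⟩ := exists_coprime_arith (d (Fin.castSucc (0 : Fin m))) G N hG0 h1
      refine ⟨1, fun j => if j = (0 : Fin (m+1)) then t else 0, ?_⟩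
      rw [hdecomp]
      have herase : (Finset.univ.erase (0 : Fin m)).gcd (fun i : Fin m =>
          1 * d i.castSucc + (N : ℤ) * (if i.castSucc = (0 : Fin (m+1)) then t else 0)) = G := by
        apply Finset.gcd_congr rfl
        intro i hi
        have hine : i ≠ 0 := (Finset.mem_erase.mp hi).1
        rw [if_neg (by
          intro hcs
          exact hine (Fin.ext (by simpa using congrArg Fin.val hcs)))]
        ring
      rw [herase]
      have hf0 : 1 * d (Fin.castSucc (0 : Fin m))
          + (N : ℤ) * (if Fin.castSucc (0 : Fin m) = (0 : Fin (m+1)) then t else 0)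
          = d (Fin.castSucc (0 : Fin m)) + (N : ℤ) * t := by
        rw [if_pos (by simp)]; ring
      rw [hf0]
      rw [← Int.coe_gcd, ht]
      rfl
  set w : Fin (m+1) → ℤ := fun j => lam * d j + (N : ℤ) * z j with hw
  obtain ⟨B, hB⟩ := exists_unit_matrix_col m (fun i => w i.castSucc) hwgcd (0 : Fin m)
  set r : Matrix (Fin 1) (Fin m) ℤ := fun _ j => if j = 0 then w lst else 0 with hr
  set Q : Matrix (Fin m ⊕ Fin 1) (Fin m ⊕ Fin 1) ℤ := Matrix.fromBlocks B.val 0 r 1 with hQ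
  set Qi : Matrix (Fin m ⊕ Fin 1) (Fin m ⊕ Fin 1) ℤ :=
    Matrix.fromBlocks (B⁻¹).val 0 (-(r * (B⁻¹).val)) 1 with hQi
  have hBBi : B.val * (B⁻¹).val = 1 := by rw [← Units.val_mul, mul_inv_cancel B, Units.val_one]
  have hBiB : (B⁻¹).val * B.val = 1 := by rw [← Units.val_mul, inv_mul_cancel B, Units.val_one]
  have hQQi : Q * Qi = 1 := by
    rw [hQ, hQi, Matrix.fromBlocks_multiply]
    simp [hBBi, ← Matrix.fromBlocks_one]
  have hQiQ : Qi * Q = 1 := by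
    rw [hQ, hQi, Matrix.fromBlocks_multiply]
    simp [hBiB, Matrix.mul_assoc, ← Matrix.fromBlocks_one]
  set e : Fin m ⊕ Fin 1 ≃ Fin (m+1) := finSumFinEquiv with he
  have hinl : ∀ i : Fin m, e (Sum.inl i) = i.castSucc := fun i => rfl
  have hinr : e (Sum.inr 0) = lst := by
    apply Fin.ext
    simp [he, lst]
  set pu : (Matrix (Fin (m+1)) (Fin (m+1)) ℤ)ˣ :=
    ⟨Q.submatrix e.symm e.symm, Qi.submatrix e.symm e.symm,
      by rw [Matrix.submatrix_mul_equiv, hQQi, Matrix.submatrix_one_equiv],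
      by rw [Matrix.submatrix_mul_equiv, hQiQ, Matrix.submatrix_one_equiv]⟩ with hpu
  have hsymm0 : e.symm 0 = Sum.inl 0 := by
    rw [Equiv.symm_apply_eq]
    exact ((hinl 0).trans (by simp)).symm
  have hsymml : e.symm lst = Sum.inr 0 := by
    rw [Equiv.symm_apply_eq]
    exact hinr.symm
  have hsymmc : ∀ i : Fin m, e.symm i.castSucc = Sum.inl i := fun i => by
    rw [Equiv.symm_apply_eq]
    exact (hinl i).symm
  have hpcol0 : ∀ i, pu.val i 0 = w i := by
    intro i
    show Q (e.symm i) (e.symm 0) = w i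
    rw [hsymm0]
    refine Fin.lastCases ?_ ?_ i
    · rw [show e.symm (Fin.last m) = Sum.inr 0 from hsymml]
      show r 0 0 = w lst
      rw [hr]
      simp
    · intro i
      rw [hsymmc i]
      show B.val i 0 = w i.castSucc
      exact hB i
  have hpcoll : ∀ i, pu.val i lst = if i = lst then 1 else 0 := by
    intro i
    show Q (e.symm i) (e.symm lst) = _
    rw [hsymml]
    refine Fin.lastCases ?_ ?_ i
    · rw [show e.symm (Fin.last m) = Sum.inr 0 from hsymml]
      show (1 : Matrix (Fin 1) (Fin 1) ℤ) 0 0 = _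
      rw [if_pos rfl]
      simp
    · intro i
      rw [hsymmc i]
      show (0 : Matrix (Fin m) (Fin 1) ℤ) i 0 = _
      rw [if_neg (Fin.castSucc_lt_last i).ne]
      simp
  refine ⟨γ0 * pu, ?_, ?_⟩
  · intro i hi
    have hi0 : i ≠ 0 := by
      intro h
      rw [h] at hi
      simp at hi
    show (N : ℤ) ∣ (A * pu.val) i 0
    have hentry : (A * pu.val) i 0 = lam * ((A * D) i 0) + (N : ℤ) * (∑ j, A i j * z j) := by
      rw [Matrix.mul_apply]
      have hterm : ∀ j ∈ Finset.univ, A i j * pu.val j 0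
          = lam * (A i j * D j 0) + (N : ℤ) * (A i j * z j) := by
        intro j _
        rw [hpcol0 j]
        show A i j * (lam * d j + (N : ℤ) * z j) = _
        ring
      rw [Finset.sum_congr rfl hterm, Finset.sum_add_distrib, ← Finset.mul_sum,
        ← Finset.mul_sum, ← Matrix.mul_apply]
    rw [hentry, hAD, Matrix.one_apply_ne hi0, mul_zero, zero_add]
    exact Dvd.intro _ rfl
  · intro i
    show (A * pu.val) i lst = v i
    rw [Matrix.mul_apply]
    rw [Finset.sum_eq_single lst (fun j _ hj => by rw [hpcoll j, if_neg hj, mul_zero]) (by simp)]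
    rw [hpcoll lst, if_pos rfl, mul_one, hγ0 i]


/-- The last-column map induces a bijection between the cosets `Γ̃/(Γ̃ ∩ P̃)`, for
`Γ̃ = Γ̃₀(N) = {γ ∈ GL(n,ℤ) : N ∣ γ_{i1} for i ≥ 2}` and `P̃ = {γ ∈ GL(n,ℤ) : last column
(0,…,0,±1)ᵗ}`, and the set of primitive vectors `v ∈ ℤⁿ` with `N ∣ v₁,…,v_{n-1}`, modulo `±1`:
two elements of `Γ̃` lie in the same coset of `Γ̃ ∩ P̃` iff their last columns agree up to sign,
and every primitive vector satisfying the divisibility conditions arises as the last column of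
some element of `Γ̃`. -/
theorem mirabolic_coset_bijection (n N : ℕ) (hn : 2 ≤ n) (hN : 0 < N)
    (Γt Pt : Set (GL (Fin n) ℤ))
    (hΓ : Γt = {γ : GL (Fin n) ℤ | ∀ i : Fin n, 1 ≤ (i : ℕ) →
        (N : ℤ) ∣ (γ : Matrix (Fin n) (Fin n) ℤ) i ⟨0, by omega⟩})
    (hP : Pt = {γ : GL (Fin n) ℤ |
        (∀ i : Fin n, (i : ℕ) ≠ n - 1 →
          (γ : Matrix (Fin n) (Fin n) ℤ) i ⟨n - 1, by omega⟩ = 0) ∧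
        ((γ : Matrix (Fin n) (Fin n) ℤ) ⟨n - 1, by omega⟩ ⟨n - 1, by omega⟩ = 1 ∨
         (γ : Matrix (Fin n) (Fin n) ℤ) ⟨n - 1, by omega⟩ ⟨n - 1, by omega⟩ = -1)}) :
    (∀ γ ∈ Γt, ∀ γ' ∈ Γt,
      ((∃ p ∈ Γt ∩ Pt, γ' = γ * p) ↔
        ((fun i => (γ' : Matrix (Fin n) (Fin n) ℤ) i ⟨n - 1, by omega⟩)
            = (fun i => (γ : Matrix (Fin n) (Fin n) ℤ) i ⟨n - 1, by omega⟩) ∨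
         (fun i => (γ' : Matrix (Fin n) (Fin n) ℤ) i ⟨n - 1, by omega⟩)
            = (fun i => -(γ : Matrix (Fin n) (Fin n) ℤ) i ⟨n - 1, by omega⟩)))) ∧
    (∀ v : Fin n → ℤ, Finset.univ.gcd v = 1 →
      (∀ i : Fin n, (i : ℕ) ≠ n - 1 → (N : ℤ) ∣ v i) →
      ∃ γ ∈ Γt, ∀ i, (γ : Matrix (Fin n) (Fin n) ℤ) i ⟨n - 1, by omega⟩ = v i) := by
  subst hΓ hP
  obtain ⟨m, rfl⟩ : ∃ m, n = m + 1 := ⟨n - 1, by omega⟩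
  have hm : 1 ≤ m := by omega
  haveI : NeZero N := ⟨hN.ne'⟩
  set lst : Fin (m + 1) := Fin.last m with hlst
  have hlne : ∀ i : Fin (m + 1), i ≠ lst ↔ (i : ℕ) ≠ m + 1 - 1 := by
    intro i
    constructor
    · intro h h'; exact h (Fin.ext (by simpa [hlst] using h'))
    · intro h h'; exact h (by rw [h']; simp [lst])
  -- the cast-to-ZMod map
  let φ : Matrix (Fin (m+1)) (Fin (m+1)) ℤ → Matrix (Fin (m+1)) (Fin (m+1)) (ZMod N) :=
    fun M => M.map (Int.castRingHom (ZMod N))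
  have hφmul : ∀ X Y, φ (X * Y) = φ X * φ Y := fun X Y => Matrix.map_mul
  have hφone : φ 1 = 1 := Matrix.map_one _ (map_zero _) (map_one _)
  have hmemΓ : ∀ γ : GL (Fin (m+1)) ℤ,
      γ ∈ {γ : GL (Fin (m+1)) ℤ | ∀ i : Fin (m+1), 1 ≤ (i : ℕ) →
        (N : ℤ) ∣ (γ : Matrix (Fin (m+1)) (Fin (m+1)) ℤ) i ⟨0, by omega⟩} ↔
      (∀ i : Fin (m+1), i ≠ 0 → φ (γ : Matrix (Fin (m+1)) (Fin (m+1)) ℤ) i 0 = 0) := by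
    intro γ
    constructor
    · intro h i hi
      have h1 : 1 ≤ (i : ℕ) := by
        rcases Nat.eq_zero_or_pos (i : ℕ) with h' | h'
        · exact absurd (Fin.ext h' : i = 0) hi
        · omega
      have := h i h1
      simpa [φ, Matrix.map_apply, ZMod.intCast_zmod_eq_zero_iff_dvd] using this
    · intro h i hi
      have hi' : i ≠ 0 := by
        intro h'; rw [h'] at hi; simp at hi
      have := h i hi'
      simpa [φ, Matrix.map_apply, ZMod.intCast_zmod_eq_zero_iff_dvd] using this
  constructor
  · -- part 1
    intro γ hγ γ' hγ'
    constructor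
    · rintro ⟨p, ⟨hpΓ, hpP⟩, rfl⟩
      have hp0' : ∀ j : Fin (m+1), j ≠ lst → (p : Matrix (Fin (m+1)) (Fin (m+1)) ℤ) j lst = 0 :=
        fun j hj => hpP.1 j ((hlne j).mp hj)
      have hpd' : (p : Matrix (Fin (m+1)) (Fin (m+1)) ℤ) lst lst = 1 ∨
          (p : Matrix (Fin (m+1)) (Fin (m+1)) ℤ) lst lst = -1 := hpP.2
      have key : ∀ i, ((γ : Matrix (Fin (m+1)) (Fin (m+1)) ℤ)
          * (p : Matrix (Fin (m+1)) (Fin (m+1)) ℤ)) i lst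
          = (γ : Matrix (Fin (m+1)) (Fin (m+1)) ℤ) i lst
            * (p : Matrix (Fin (m+1)) (Fin (m+1)) ℤ) lst lst := by
        intro i
        rw [Matrix.mul_apply]
        exact Finset.sum_eq_single lst
          (fun j _ hj => by rw [hp0' j hj, mul_zero]) (by simp)
      rcases hpd' with h1 | h1
      · left; funext i
        show ((γ : Matrix (Fin (m+1)) (Fin (m+1)) ℤ)
          * (p : Matrix (Fin (m+1)) (Fin (m+1)) ℤ)) i lst
          = (γ : Matrix (Fin (m+1)) (Fin (m+1)) ℤ) i lst
        rw [key i, h1, mul_one]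
      · right; funext i
        show ((γ : Matrix (Fin (m+1)) (Fin (m+1)) ℤ)
          * (p : Matrix (Fin (m+1)) (Fin (m+1)) ℤ)) i lst
          = -((γ : Matrix (Fin (m+1)) (Fin (m+1)) ℤ) i lst)
        rw [key i, h1, mul_neg_one]
    · intro hcol
      refine ⟨γ⁻¹ * γ', ⟨?_, ?_⟩, (mul_inv_cancel_left γ γ').symm⟩
      · -- Γ membership
        rw [hmemΓ]
        have hA := (hmemΓ γ).mp hγ
        have hA' := (hmemΓ γ').mp hγ'
        show ∀ i : Fin (m+1), i ≠ 0 →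
          φ ((γ⁻¹ : GL (Fin (m+1)) ℤ).val * (γ' : GL (Fin (m+1)) ℤ).val) i 0 = 0
        intro i hi
        rw [hφmul]
        have hBA : φ (γ⁻¹ : GL (Fin (m+1)) ℤ).val * φ (γ : GL (Fin (m+1)) ℤ).val = 1 := by
          rw [← hφmul, ← Units.val_mul, inv_mul_cancel γ, Units.val_one, hφone]
        have hB := colzero_inv (φ (γ : GL (Fin (m+1)) ℤ).val)
          (φ (γ⁻¹ : GL (Fin (m+1)) ℤ).val) 0 hBA hA
        exact colzero_mul _ _ 0 hB hA' i hi
      · -- P membership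
        have base : ∀ i : Fin (m+1),
            ((γ⁻¹ : GL (Fin (m+1)) ℤ).val * (γ : GL (Fin (m+1)) ℤ).val) i lst
            = if i = lst then 1 else 0 := by
          intro i
          rw [← Units.val_mul, inv_mul_cancel γ, Units.val_one, Matrix.one_apply]
        have key : ∀ (ε : ℤ), (∀ j, (γ' : Matrix (Fin (m+1)) (Fin (m+1)) ℤ) j lst
              = ε * (γ : Matrix (Fin (m+1)) (Fin (m+1)) ℤ) j lst) →
            ∀ i, ((γ⁻¹ : GL (Fin (m+1)) ℤ).val * (γ' : GL (Fin (m+1)) ℤ).val) i lst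
              = ε * (if i = lst then 1 else 0) := by
          intro ε hε i
          rw [Matrix.mul_apply]
          have : ∀ j ∈ Finset.univ, (γ⁻¹ : GL (Fin (m+1)) ℤ).val i j
              * (γ' : GL (Fin (m+1)) ℤ).val j lst
              = ε * ((γ⁻¹ : GL (Fin (m+1)) ℤ).val i j * (γ : GL (Fin (m+1)) ℤ).val j lst) := by
            intro j _
            rw [hε j]; ring
          rw [Finset.sum_congr rfl this, ← Finset.mul_sum, ← Matrix.mul_apply, base i]
        have main : ∀ (ε : ℤ), (∀ j, (γ' : Matrix (Fin (m+1)) (Fin (m+1)) ℤ) j lst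
              = ε * (γ : Matrix (Fin (m+1)) (Fin (m+1)) ℤ) j lst) →
            (∀ i : Fin (m+1), (i : ℕ) ≠ m + 1 - 1 →
              ((γ⁻¹ : GL (Fin (m+1)) ℤ).val * (γ' : GL (Fin (m+1)) ℤ).val) i lst = 0) ∧
            ((γ⁻¹ : GL (Fin (m+1)) ℤ).val * (γ' : GL (Fin (m+1)) ℤ).val) lst lst = ε := by
          intro ε hε
          constructor
          · intro i hi
            rw [key ε hε i, if_neg ((hlne i).mpr hi), mul_zero]
          · rw [key ε hε lst, if_pos rfl, mul_one]
        rcases hcol with h1 | h1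
        · have hε : ∀ j, (γ' : Matrix (Fin (m+1)) (Fin (m+1)) ℤ) j lst
              = 1 * (γ : Matrix (Fin (m+1)) (Fin (m+1)) ℤ) j lst := by
            intro j
            rw [one_mul]; exact congrFun h1 j
          exact ⟨(main 1 hε).1, Or.inl (main 1 hε).2⟩
        · have hε : ∀ j, (γ' : Matrix (Fin (m+1)) (Fin (m+1)) ℤ) j lst
              = (-1) * (γ : Matrix (Fin (m+1)) (Fin (m+1)) ℤ) j lst := by
            intro j
            rw [neg_one_mul]; exact congrFun h1 j
          exact ⟨(main (-1) hε).1, Or.inr (main (-1) hε).2⟩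
  · intro v hv hdvd
    obtain ⟨γu, hmem, hcol⟩ := part2 N m hN hm v hv hdvd
    exact ⟨γu, hmem, hcol⟩
end

section
/- Let w_long be the n×n antidiagonal permutation matrix (1's on the antidiagonal), and for z ∈ ℝ^{n-1} let u(z) be the matrix with 1's on the diagonal, first row (1, z_{n-1}, …, z_1), and zeros elsewhere. If z_1 ≠ 0, then w_long · u(z) = u' · q, where u' is the unipotent matrix with 1's on the diagonal and first row (1, −z_2/z_1, −z_3/z_1, …, −z_{n-1}/z_1, 1/z_1), and q is a matrix whose first row is (−1/z_1, 0, …, 0) and whose last row is (1, z_{n-1}, z_{n-2}, …, z_1); in particular q has last column (0, 0, …, 0, z_1)ᵗ modulo the mirabolic subgroup, and det q = ± det(w_long). -/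
open Matrix

/-- Explicit big-cell Bruhat decomposition of `w_long · u(z)` relative to the mirabolic
parabolic: if `z₁ ≠ 0` then `w_long · u(z) = u' · q`, where `u'` is unipotent with first row
`(1, −z₂/z₁, …, −z_{n-1}/z₁, 1/z₁)`, and `q` has first row `(−1/z₁, 0, …, 0)`, last row
`(1, z_{n-1}, …, z₁)`, and `det q = ± det w_long`. -/
theorem wlong_bruhat_decomposition (n : ℕ) (hn : 2 ≤ n) (z : ℕ → ℝ) (hz : z 1 ≠ 0) :
    let w : Matrix (Fin n) (Fin n) ℝ :=
      Matrix.of fun i j => if (i : ℕ) + (j : ℕ) = n - 1 then 1 else 0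
    let u : Matrix (Fin n) (Fin n) ℝ :=
      Matrix.of fun i j =>
        if i = j then 1 else if (i : ℕ) = 0 then z (n - (j : ℕ)) else 0
    let u' : Matrix (Fin n) (Fin n) ℝ :=
      Matrix.of fun i j =>
        if i = j then 1
        else if (i : ℕ) = 0 then
          (if (j : ℕ) = n - 1 then 1 / z 1 else -z ((j : ℕ) + 1) / z 1)
        else 0
    ∃ q : Matrix (Fin n) (Fin n) ℝ,
      (∀ j : Fin n, q ⟨0, by omega⟩ j = if (j : ℕ) = 0 then -1 / z 1 else 0) ∧
      (∀ j : Fin n, q ⟨n - 1, by omega⟩ j = if (j : ℕ) = 0 then 1 else z (n - (j : ℕ))) ∧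
      (q.det = w.det ∨ q.det = -w.det) ∧
      w * u = u' * q := by
  intro w u u'
  set q : Matrix (Fin n) (Fin n) ℝ :=
    Matrix.of fun i j =>
      if (i : ℕ) = 0 then (if (j : ℕ) = 0 then -1 / z 1 else 0)
      else if (i : ℕ) + (j : ℕ) = n - 1 then 1
      else if (i : ℕ) = n - 1 then (if (j : ℕ) = 0 then 1 else z (n - (j : ℕ)))
      else 0 with hq
  have key : w * u = u' * q := by
    ext i j
    have hi := i.isLt
    have hj := j.isLt
    rw [Matrix.mul_apply, Matrix.mul_apply]
    have hL : ∑ k, w i k * u k j = u ⟨n - 1 - (i : ℕ), by omega⟩ j := by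
      rw [Finset.sum_congr rfl
        (fun k _ => show w i k * u k j
            = if k = (⟨n - 1 - (i : ℕ), by omega⟩ : Fin n) then u k j else 0 from by
          have hk := k.isLt
          simp only [w, Matrix.of_apply, Fin.ext_iff]
          by_cases h : (i : ℕ) + (k : ℕ) = n - 1
          · rw [if_pos h, if_pos (by omega), one_mul]
          · rw [if_neg h, if_neg (by omega), zero_mul])]
      simp
    rw [hL]
    by_cases hi0 : (i : ℕ) = 0
    · -- hard case: row 0 of u' is not a standard basis vector
      by_cases hj0 : (j : ℕ) = 0
      · have hstep : ∀ k : Fin n, u' i k * q k j =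
            (if k = i then -1 / z 1 else 0)
              + (if k = (⟨n - 1, by omega⟩ : Fin n) then 1 / z 1 else 0) := by
          intro k
          have hk := k.isLt
          simp only [u', hq, Matrix.of_apply, Fin.ext_iff, hi0, hj0]
          split_ifs <;>
            first
              | ring1
              | (exfalso; omega)
              | (have h1 : (k : ℕ) + 1 = n - (j : ℕ) := (by omega); rw [h1] <;> ring1)
              | (have h1 : n - (j : ℕ) = 1 := (by omega); rw [h1] <;> ring1)
        rw [Finset.sum_congr rfl (fun k _ => hstep k), Finset.sum_add_distrib]
        simp only [Finset.sum_ite_eq', Finset.mem_univ, if_true]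
        simp only [u, Matrix.of_apply, Fin.ext_iff]
        rw [if_neg (by omega), if_neg (by omega)]
        ring
      · by_cases hjn : (j : ℕ) = n - 1
        · have hstep : ∀ k : Fin n, u' i k * q k j =
              (if k = (⟨n - 1, by omega⟩ : Fin n) then 1 / z 1 * z 1 else 0) := by
            intro k
            have hk := k.isLt
            simp only [u', hq, Matrix.of_apply, Fin.ext_iff, hi0]
            split_ifs <;>
            first
              | ring1
              | (exfalso; omega)
              | (have h1 : (k : ℕ) + 1 = n - (j : ℕ) := (by omega); rw [h1] <;> ring1)
              | (have h1 : n - (j : ℕ) = 1 := (by omega); rw [h1] <;> ring1)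
          rw [Finset.sum_congr rfl (fun k _ => hstep k)]
          simp only [Finset.sum_ite_eq', Finset.mem_univ, if_true]
          simp only [u, Matrix.of_apply, Fin.ext_iff]
          rw [if_pos (by omega)]
          field_simp
        · -- 1 ≤ j ≤ n - 2
          have hstep : ∀ k : Fin n, u' i k * q k j =
              (if k = (⟨n - 1 - (j : ℕ), by omega⟩ : Fin n) then -z (n - (j : ℕ)) / z 1 else 0)
                + (if k = (⟨n - 1, by omega⟩ : Fin n) then 1 / z 1 * z (n - (j : ℕ)) else 0) := by
            intro k
            have hk := k.isLt
            simp only [u', hq, Matrix.of_apply, Fin.ext_iff, hi0]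
            split_ifs <;>
            first
              | ring1
              | (exfalso; omega)
              | (have h1 : (k : ℕ) + 1 = n - (j : ℕ) := (by omega); rw [h1] <;> ring1)
              | (have h1 : n - (j : ℕ) = 1 := (by omega); rw [h1] <;> ring1)
          rw [Finset.sum_congr rfl (fun k _ => hstep k), Finset.sum_add_distrib]
          simp only [Finset.sum_ite_eq', Finset.mem_univ, if_true]
          simp only [u, Matrix.of_apply, Fin.ext_iff]
          rw [if_neg (by omega), if_neg (by omega)]
          ring
    · -- easy case: row i of u' is the standard basis vector
      have hstep : ∀ k : Fin n, u' i k * q k j = if i = k then q k j else 0 := by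
        intro k
        simp only [u', Matrix.of_apply]
        by_cases h : i = k
        · rw [if_pos h, if_pos h, one_mul]
        · rw [if_neg h, if_neg h, if_neg hi0, zero_mul]
      rw [Finset.sum_congr rfl (fun k _ => hstep k)]
      simp only [Finset.sum_ite_eq, Finset.mem_univ, if_true]
      simp only [u, hq, Matrix.of_apply, Fin.ext_iff]
      split_ifs <;> first | rfl | omega
  have hdetu : u.det = 1 := by
    rw [Matrix.det_of_upperTriangular (M := u)
      (fun i j (h : (j : Fin n) < i) => by
        have hij : i ≠ j := h.ne'
        have hi0 : (i : ℕ) ≠ 0 := by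
          have := Fin.lt_iff_val_lt_val.mp h; omega
        simp only [u, Matrix.of_apply, if_neg hij, if_neg hi0])]
    simp [u]
  have hdetu' : u'.det = 1 := by
    rw [Matrix.det_of_upperTriangular (M := u')
      (fun i j (h : (j : Fin n) < i) => by
        have hij : i ≠ j := h.ne'
        have hi0 : (i : ℕ) ≠ 0 := by
          have := Fin.lt_iff_val_lt_val.mp h; omega
        simp only [u', Matrix.of_apply, if_neg hij, if_neg hi0])]
    simp [u']
  have hdet : q.det = w.det := by
    have := congrArg Matrix.det key
    rw [Matrix.det_mul, Matrix.det_mul, hdetu, hdetu', mul_one, one_mul] at this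
    exact this.symm
  refine ⟨q, ?_, ?_, Or.inl hdet, key⟩
  · intro j
    simp only [hq, Matrix.of_apply]
    split_ifs <;> first | rfl | omega
  · intro j
    have hj := j.isLt
    simp only [hq, Matrix.of_apply]
    split_ifs <;> first | rfl | omega
end

section
/- Let n ≥ 2, η_0, …, η_{n-1} ∈ {0,1}, and β_0, …, β_{n-1} ∈ ℂ with Re(β_j) > 0 for all j and Re(β_0 + ⋯ + β_{n-1}) < 1. For t_n ∈ ℝ, t_n ≠ 0, define I(t_n) = ∫_{ℝ^{n-1}} |t_n − Σ_{j=1}^{n-1} t_j|^{β_0−1} sgn(t_n − Σ t_j)^{η_0} Π_{j=1}^{n-1} (|t_j|^{β_j−1} sgn(t_j)^{η_j}) dt_1⋯dt_{n-1}. Then the integral converges absolutely and I(t_n) = |t_n|^{β_0+⋯+β_{n-1}−1} · sgn(t_n)^{η_0+⋯+η_{n-1}} · I(1). -/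
open MeasureTheory

namespace BetaLikeAux

open ENNReal Set

/-- nonnegative kernel -/
noncomputable def K (a x : ℝ) : ℝ≥0∞ := ENNReal.ofReal (|x| ^ (a - 1))

lemma measurable_K (a : ℝ) : Measurable fun x : ℝ => K a x := by
  apply Measurable.ennreal_ofReal
  exact (continuous_abs.measurable).pow measurable_const

lemma measurable_sign : Measurable Real.sign := by
  unfold Real.sign
  exact Measurable.ite measurableSet_Iio measurable_const
    (Measurable.ite measurableSet_Ioi measurable_const measurable_const)

lemma sign_mul (x y : ℝ) : Real.sign (x * y) = Real.sign x * Real.sign y := by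
  rcases lt_trichotomy x 0 with hx | hx | hx <;>
    rcases lt_trichotomy y 0 with hy | hy | hy <;>
    simp [hx, hy, Real.sign_of_neg, Real.sign_of_pos, Real.sign_zero,
      mul_pos_of_neg_of_neg, mul_neg_of_neg_of_pos, mul_neg_of_pos_of_neg, mul_pos]

lemma abs_sign_le_one (x : ℝ) : |Real.sign x| ≤ 1 := by
  rcases Real.sign_apply_eq x with h | h | h <;> simp [h]

lemma norm_cpow_real_le (r : ℝ) (hr : 0 ≤ r) (c : ℂ) : ‖((r : ℝ) : ℂ) ^ c‖ ≤ r ^ c.re := by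
  rcases hr.lt_or_eq with h | h
  · rw [Complex.norm_cpow_eq_rpow_re_of_pos h]
  · rcases eq_or_ne c 0 with rfl | hc
    · simp
    · rw [← h, Complex.ofReal_zero, Complex.zero_cpow hc]
      simp [Real.rpow_nonneg]

lemma intervalIntegrable_abs_rpow {r : ℝ} (hr : -1 < r) (c : ℝ) :
    IntervalIntegrable (fun x : ℝ => |x| ^ r) volume (-c) c := by
  have h0 : ∀ d : ℝ, 0 ≤ d → IntervalIntegrable (fun x : ℝ => |x| ^ r) volume 0 d := by
    intro d hd
    have h := intervalIntegral.intervalIntegrable_rpow' (a := 0) (b := d) hr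
    rw [intervalIntegrable_iff, uIoc_of_le hd] at h ⊢
    exact h.congr_fun (fun x hx => by rw [abs_of_pos hx.1]) measurableSet_Ioc
  have hmain : ∀ d : ℝ, 0 ≤ d →
      IntervalIntegrable (fun x : ℝ => |x| ^ r) volume (-d) d := by
    intro d hd
    have h1 := h0 d hd
    have h2 : IntervalIntegrable (fun x : ℝ => |x| ^ r) volume (-d) 0 := by
      have := ((IntervalIntegrable.iff_comp_neg (f := fun x : ℝ => |x| ^ r) (a := 0) (b := d)).mp h1)
      simpa [abs_neg] using this.symm
    exact h2.trans h1
  rcases le_or_gt 0 c with hc | hc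
  · exact hmain c hc
  · have := hmain (-c) (by linarith)
    simpa using this.symm

lemma integrableOn_abs_rpow_tail {s : ℝ} (hs : s < -1) :
    IntegrableOn (fun x : ℝ => |x| ^ s) (Iic (-1) ∪ Ici 1) volume := by
  have hplus : IntegrableOn (fun x : ℝ => |x| ^ s) (Ici (1:ℝ)) volume := by
    have h := integrableOn_Ioi_rpow_of_lt hs (c := 1) one_pos
    have h' : IntegrableOn (fun x : ℝ => |x| ^ s) (Ioi (1:ℝ)) volume :=
      h.congr_fun (fun x hx => by rw [abs_of_pos (lt_trans one_pos hx)]) measurableSet_Ioi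
    rwa [integrableOn_Ici_iff_integrableOn_Ioi]
  have hminus : IntegrableOn (fun x : ℝ => |x| ^ s) (Iic (-1:ℝ)) volume := by
    have hmap : Measure.map (fun x : ℝ => -x) (volume.restrict (Ici (1:ℝ)))
        = volume.restrict (Iic (-1:ℝ)) := by
      have hpre : (Ici (1:ℝ)) = (fun x : ℝ => -x) ⁻¹' (Iic (-1:ℝ)) := by
        ext x; simp [neg_le]
      rw [hpre, ← Measure.restrict_map measurable_neg measurableSet_Iic,
        Measure.map_neg_eq_self]
    rw [IntegrableOn, ← hmap,
      integrable_map_measure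
        ((continuous_abs.measurable.pow measurable_const).aestronglyMeasurable)
        measurable_neg.aemeasurable]
    exact hplus.congr_fun (fun x hx => by simp [Function.comp, abs_neg]) measurableSet_Ici
  exact hminus.union hplus

lemma integrableOn_abs_rpow_Icc {r : ℝ} (hr : -1 < r) (c : ℝ) :
    IntegrableOn (fun x : ℝ => |x| ^ r) (Icc (-c) c) volume := by
  rcases le_or_gt (-c) c with h | h
  · rw [← intervalIntegrable_iff_integrableOn_Icc_of_le h]
    exact intervalIntegrable_abs_rpow hr c
  · rw [Icc_eq_empty_of_lt h]
    exact integrableOn_empty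

lemma onedim_integrable {a b : ℝ} (ha : 0 < a) (hb : 0 < b) (hab : a + b < 1) :
    Integrable (fun x : ℝ => |1 - x| ^ (a - 1) * |x| ^ (b - 1)) volume := by
  have ha1 : a < 1 := by linarith
  have hb1 : b < 1 := by linarith
  have hfm : AEStronglyMeasurable (fun x : ℝ => |1 - x| ^ (a - 1) * |x| ^ (b - 1)) volume := by
    apply Measurable.aestronglyMeasurable
    exact (((continuous_const.sub continuous_id).abs.measurable).pow measurable_const).mul
      ((continuous_abs.measurable).pow measurable_const)
  have hcover : (univ : Set ℝ) ⊆
      Icc (-2 : ℝ) (1/2) ∪ Icc (1/2 : ℝ) 3 ∪ (Iic (-1:ℝ) ∪ Ici (2:ℝ)) := by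
    intro x _
    simp only [Set.mem_union, Set.mem_Icc, Set.mem_Iic, Set.mem_Ici]
    rcases le_or_gt x (1/2 : ℝ) with h1 | h1
    · rcases le_or_gt (-2 : ℝ) x with h2 | h2
      · exact Or.inl (Or.inl ⟨h2, h1⟩)
      · exact Or.inr (Or.inl (by linarith))
    · rcases le_or_gt x 3 with h2 | h2
      · exact Or.inl (Or.inr ⟨h1.le, h2⟩)
      · exact Or.inr (Or.inr (by linarith))
  rw [← integrableOn_univ]
  apply IntegrableOn.mono_set _ hcover
  have hA : IntegrableOn (fun x : ℝ => |1 - x| ^ (a - 1) * |x| ^ (b - 1))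
      (Icc (-2 : ℝ) (1/2)) volume := by
    apply Integrable.mono' (g := fun x : ℝ => (1/2 : ℝ) ^ (a - 1) * |x| ^ (b - 1))
    · exact ((integrableOn_abs_rpow_Icc (r := b - 1) (by linarith) 2).mono_set
        (Icc_subset_Icc_right (by norm_num))).const_mul _
    · exact hfm.restrict
    · filter_upwards [self_mem_ae_restrict (measurableSet_Icc :
        MeasurableSet (Icc (-2:ℝ) (1/2)))] with x hx
      have h1 : (1/2 : ℝ) ≤ |1 - x| := by
        rw [abs_of_nonneg (by linarith [hx.2])]; linarith [hx.2]
      have h2 := Real.rpow_le_rpow_of_nonpos (by norm_num : (0:ℝ) < 1/2) h1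
        (by linarith : a - 1 ≤ 0)
      rw [Real.norm_eq_abs, abs_of_nonneg (mul_nonneg (Real.rpow_nonneg (abs_nonneg _) _)
        (Real.rpow_nonneg (abs_nonneg _) _))]
      exact mul_le_mul_of_nonneg_right h2 (Real.rpow_nonneg (abs_nonneg _) _)
  have hB : IntegrableOn (fun x : ℝ => |1 - x| ^ (a - 1) * |x| ^ (b - 1))
      (Icc (1/2 : ℝ) 3) volume := by
    apply Integrable.mono' (g := fun x : ℝ => |1 - x| ^ (a - 1) * (1/2 : ℝ) ^ (b - 1))
    · have h := (intervalIntegrable_abs_rpow (r := a - 1) (by linarith) 2).comp_sub_left 1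
      have h2 := h.symm
      rw [show (1:ℝ) - 2 = -1 by norm_num, show (1:ℝ) - -2 = 3 by norm_num] at h2
      rw [intervalIntegrable_iff_integrableOn_Icc_of_le (by norm_num : (-1:ℝ) ≤ 3)] at h2
      exact (h2.mono_set (Icc_subset_Icc_left (by norm_num))).mul_const _
    · exact hfm.restrict
    · filter_upwards [self_mem_ae_restrict (measurableSet_Icc :
        MeasurableSet (Icc (1/2:ℝ) 3))] with x hx
      have h1 : (1/2 : ℝ) ≤ |x| := by
        rw [abs_of_nonneg (by linarith [hx.1])]; exact hx.1
      have h2 := Real.rpow_le_rpow_of_nonpos (by norm_num : (0:ℝ) < 1/2) h1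
        (by linarith : b - 1 ≤ 0)
      rw [Real.norm_eq_abs, abs_of_nonneg (mul_nonneg (Real.rpow_nonneg (abs_nonneg _) _)
        (Real.rpow_nonneg (abs_nonneg _) _))]
      exact mul_le_mul_of_nonneg_left h2 (Real.rpow_nonneg (abs_nonneg _) _)
  have hC : IntegrableOn (fun x : ℝ => |1 - x| ^ (a - 1) * |x| ^ (b - 1))
      (Iic (-1:ℝ) ∪ Ici (2:ℝ)) volume := by
    apply Integrable.mono' (g := fun x : ℝ => 2 ^ (1 - a) * |x| ^ (a + b - 2))
    · exact ((integrableOn_abs_rpow_tail (by linarith : a + b - 2 < -1)).mono_set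
        (by
          intro x hx
          rcases hx with h | h
          · exact Or.inl h
          · exact Or.inr (le_trans (by norm_num : (1:ℝ) ≤ 2) h))).const_mul _
    · exact hfm.restrict
    · filter_upwards [self_mem_ae_restrict ((measurableSet_Iic).union measurableSet_Ici :
        MeasurableSet (Iic (-1:ℝ) ∪ Ici (2:ℝ)))] with x hx
      have hx1 : 1 ≤ |x| := by
        rcases hx with h | h
        · simp only [Set.mem_Iic] at h
          rw [abs_of_nonpos (by linarith)]; linarith
        · simp only [Set.mem_Ici] at h
          rw [abs_of_nonneg (by linarith)]; linarith
      have hxpos : 0 < |x| := lt_of_lt_of_le one_pos hx1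
      have key : |x| / 2 ≤ |1 - x| := by
        rcases hx with h | h
        · simp only [Set.mem_Iic] at h
          rw [abs_of_nonpos (by linarith), abs_of_nonneg (by linarith)]; linarith
        · simp only [Set.mem_Ici] at h
          rw [abs_of_nonneg (by linarith), abs_of_nonpos (by linarith)]; linarith
      have h2 : |1 - x| ^ (a - 1) ≤ (|x| / 2) ^ (a - 1) :=
        Real.rpow_le_rpow_of_nonpos (by positivity) key (by linarith)
      have h3 : (|x| / 2) ^ (a - 1) = |x| ^ (a - 1) * 2 ^ (1 - a) := by
        rw [Real.div_rpow (abs_nonneg _) (by norm_num), div_eq_mul_inv,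
          ← Real.rpow_neg (by norm_num : (0:ℝ) ≤ 2), show -(a-1) = 1 - a by ring]
      rw [Real.norm_eq_abs, abs_of_nonneg (mul_nonneg (Real.rpow_nonneg (abs_nonneg _) _)
        (Real.rpow_nonneg (abs_nonneg _) _))]
      calc |1 - x| ^ (a - 1) * |x| ^ (b - 1)
          ≤ (|x| ^ (a - 1) * 2 ^ (1 - a)) * |x| ^ (b - 1) := by
            rw [← h3]; exact mul_le_mul_of_nonneg_right h2 (Real.rpow_nonneg (abs_nonneg _) _)
        _ = 2 ^ (1 - a) * |x| ^ (a + b - 2) := by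
            rw [mul_comm (|x| ^ (a-1)) ((2:ℝ) ^ (1-a)), mul_assoc, ← Real.rpow_add hxpos,
              show a - 1 + (b - 1) = a + b - 2 by ring]
  exact (hA.union hB).union hC

lemma onedim_finite {a b : ℝ} (ha : 0 < a) (hb : 0 < b) (hab : a + b < 1) :
    (∫⁻ x : ℝ, K a (1 - x) * K b x) < ⊤ := by
  calc (∫⁻ x : ℝ, K a (1 - x) * K b x)
      = ∫⁻ x : ℝ, ENNReal.ofReal (|1 - x| ^ (a - 1) * |x| ^ (b - 1)) := by
        apply lintegral_congr; intro x
        rw [K, K, ← ENNReal.ofReal_mul (Real.rpow_nonneg (abs_nonneg _) _)]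
    _ < ⊤ := (onedim_integrable ha hb hab).lintegral_lt_top

lemma onedim_scale {a b : ℝ} (u : ℝ) (hu : u ≠ 0) :
    (∫⁻ x : ℝ, K a (u - x) * K b x) =
      ENNReal.ofReal (|u| ^ (a + b - 1)) * ∫⁻ x : ℝ, K a (1 - x) * K b x := by
  have hu' : (0:ℝ) < |u| := abs_pos.mpr hu
  have hF : Measurable fun x : ℝ => K a (u - x) * K b x :=
    ((measurable_K a).comp (measurable_const.sub measurable_id)).mul (measurable_K b)
  have hG : Measurable fun x : ℝ => K a (1 - x) * K b x :=
    ((measurable_K a).comp (measurable_const.sub measurable_id)).mul (measurable_K b)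
  have key : ∫⁻ y : ℝ, K a (u - u * y) * K b (u * y)
      = ENNReal.ofReal (|u| ^ (a - 1) * |u| ^ (b - 1)) * ∫⁻ x : ℝ, K a (1 - x) * K b x := by
    have hpt : ∀ y : ℝ, K a (u - u * y) * K b (u * y)
        = ENNReal.ofReal (|u| ^ (a - 1) * |u| ^ (b - 1)) * (K a (1 - y) * K b y) := by
      intro y
      have h1 : u - u * y = u * (1 - y) := by ring
      rw [h1, K, K, K, K, abs_mul, abs_mul, Real.mul_rpow (abs_nonneg _) (abs_nonneg _),
        Real.mul_rpow (abs_nonneg _) (abs_nonneg _),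
        ENNReal.ofReal_mul (Real.rpow_nonneg (abs_nonneg _) _),
        ENNReal.ofReal_mul (Real.rpow_nonneg (abs_nonneg _) _),
        ENNReal.ofReal_mul (Real.rpow_nonneg (abs_nonneg _) _)]
      ring
    simp_rw [hpt]
    rw [lintegral_const_mul _ hG]
  have h2 : (∫⁻ x : ℝ, K a (u - x) * K b x ∂(Measure.map (u * ·) volume))
      = ∫⁻ y : ℝ, K a (u - u * y) * K b (u * y) :=
    lintegral_map hF (measurable_const_mul u)
  rw [Real.map_volume_mul_left hu, lintegral_smul_measure, smul_eq_mul, key] at h2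
  have h3 := congrArg (fun z => ENNReal.ofReal |u| * z) h2
  rw [← mul_assoc, ← ENNReal.ofReal_mul (abs_nonneg _)] at h3
  have habs : |u| * |u⁻¹| = 1 := by
    rw [abs_inv]; field_simp
  rw [habs, ENNReal.ofReal_one, one_mul, ← mul_assoc,
    ← ENNReal.ofReal_mul (abs_nonneg _)] at h3
  rw [h3]
  congr 2
  nth_rewrite 1 [← Real.rpow_one |u|]
  rw [← mul_assoc, ← Real.rpow_add hu', ← Real.rpow_add hu']
  ring_nf

lemma hyperplane_null (m : ℕ) (t : ℝ) (ht : t ≠ 0) :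
    volume {y : Fin m → ℝ | ∑ j, y j = t} = 0 := by
  rcases Nat.eq_zero_or_pos m with rfl | hm
  · have h : {y : Fin 0 → ℝ | ∑ j, y j = t} = ∅ := by
      ext y
      simp only [Set.mem_setOf_eq, Set.mem_empty_iff_false, iff_false, Finset.univ_eq_empty,
        Finset.sum_empty]
      exact fun h => ht h.symm
    rw [h, measure_empty]
  · set φ : (Fin m → ℝ) →ₗ[ℝ] ℝ := ∑ j, LinearMap.proj j with hφ
    have hφ_apply : ∀ y : Fin m → ℝ, φ y = ∑ j, y j := by
      intro y; simp [hφ, LinearMap.proj]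
    have hker : LinearMap.ker φ ≠ ⊤ := by
      intro h
      have h1 : φ (fun _ => 1) = 0 := by
        have := LinearMap.ker_eq_top.mp h; rw [this]; rfl
      rw [hφ_apply] at h1
      simp at h1
      omega
    set x₀ : Fin m → ℝ := fun _ => t / m with hx₀
    have hsum : ∑ j, x₀ j = t := by
      simp [hx₀, Finset.sum_const]
      field_simp
    have hset : {y : Fin m → ℝ | ∑ j, y j = t}
        = (fun y => -x₀ + y) ⁻¹' (LinearMap.ker φ : Set (Fin m → ℝ)) := by
      ext y
      simp only [Set.mem_setOf_eq, Set.mem_preimage, SetLike.mem_coe, LinearMap.mem_ker,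
        hφ_apply, Finset.sum_add_distrib, Pi.add_apply, Pi.neg_apply, Finset.sum_neg_distrib,
        hsum]
      constructor
      · intro h; rw [h]; ring
      · intro h; linarith
    rw [hset, measure_preimage_add]
    exact Measure.addHaar_submodule volume _ hker

lemma multi_finite : ∀ (m : ℕ) (a₀ : ℝ), 0 < a₀ → ∀ a : Fin m → ℝ, (∀ j, 0 < a j) →
    a₀ + ∑ j, a j < 1 → ∀ t : ℝ, t ≠ 0 →
    (∫⁻ x : Fin m → ℝ, K a₀ (t - ∑ j, x j) * ∏ j, K (a j) (x j)) < ⊤ := by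
  intro m
  induction m with
  | zero =>
    intro a₀ ha₀ a ha hsum t ht
    simp only [Finset.univ_eq_empty, Finset.sum_empty, Finset.prod_empty, mul_one, sub_zero]
    rw [lintegral_const]
    exact ENNReal.mul_lt_top ENNReal.ofReal_lt_top (by simp)
  | succ m ih =>
    intro a₀ ha₀ a ha hsum t ht
    have ha0 : 0 < a 0 := ha 0
    have htail_nonneg : (0:ℝ) ≤ ∑ j : Fin m, a (Fin.succ j) :=
      Finset.sum_nonneg fun j _ => (ha _).le
    have hsum' : a₀ + ∑ j : Fin (m+1), a j = (a₀ + a 0) + ∑ j : Fin m, a (Fin.succ j) := by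
      rw [Fin.sum_univ_succ]; ring
    have hC := onedim_finite (a := a₀) (b := a 0) ha₀ ha0 (by
      rw [hsum'] at hsum; linarith)
    set C := ∫⁻ x : ℝ, K a₀ (1 - x) * K (a 0) x with hCdef
    set g : ℝ × (Fin m → ℝ) → ℝ≥0∞ := fun p =>
      K a₀ (t - (p.1 + ∑ j, p.2 j)) * (K (a 0) p.1 * ∏ j, K (a (Fin.succ j)) (p.2 j)) with hg
    have hsum_meas : Measurable fun y : Fin m → ℝ => ∑ j, y j :=
      Finset.measurable_sum _ fun j _ => measurable_pi_apply j
    have hprod_meas : Measurable fun y : Fin m → ℝ => ∏ j, K (a (Fin.succ j)) (y j) :=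
      Finset.measurable_prod _ fun j _ => (measurable_K _).comp (measurable_pi_apply j)
    have hgm : Measurable g := by
      apply Measurable.mul
      · exact (measurable_K _).comp
          (measurable_const.sub (measurable_fst.add (hsum_meas.comp measurable_snd)))
      · exact ((measurable_K _).comp measurable_fst).mul (hprod_meas.comp measurable_snd)
    have hT := volume_preserving_piFinSuccAbove (fun _ : Fin (m+1) => ℝ) 0
    have hcomp : ∀ x : Fin (m+1) → ℝ,
        g (MeasurableEquiv.piFinSuccAbove (fun _ : Fin (m+1) => ℝ) 0 x)
          = K a₀ (t - ∑ j, x j) * ∏ j, K (a j) (x j) := by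
      intro x
      have h1 : (MeasurableEquiv.piFinSuccAbove (fun _ : Fin (m+1) => ℝ) 0 x)
          = (x 0, fun j => x (Fin.succAbove 0 j)) := rfl
      rw [h1, hg]
      simp only [Fin.succAbove_zero]
      rw [Fin.sum_univ_succ, Fin.prod_univ_succ]
    have hstep : (∫⁻ x : Fin (m+1) → ℝ, K a₀ (t - ∑ j, x j) * ∏ j, K (a j) (x j))
        = ∫⁻ p : ℝ × (Fin m → ℝ), g p := by
      rw [← hT.lintegral_comp hgm]
      apply lintegral_congr
      intro x
      rw [hcomp x]
    rw [hstep, MeasureTheory.Measure.volume_eq_prod, lintegral_prod_symm g hgm.aemeasurable]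
    have hae : ∀ᵐ y : Fin m → ℝ, t - ∑ j, y j ≠ 0 := by
      have h0 := hyperplane_null m t ht
      rw [ae_iff]
      convert h0 using 2
      ext y
      simp [sub_eq_zero, eq_comm]
    have hinner : ∀ᵐ y : Fin m → ℝ, (∫⁻ s, g (s, y))
        = C * (K (a₀ + a 0) (t - ∑ j, y j) * ∏ j, K (a (Fin.succ j)) (y j)) := by
      filter_upwards [hae] with y hy
      have h1 : ∀ s : ℝ, g (s, y)
          = (K a₀ ((t - ∑ j, y j) - s) * K (a 0) s) * ∏ j, K (a (Fin.succ j)) (y j) := by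
        intro s
        simp only [hg]
        have heq : t - (s + ∑ j, y j) = (t - ∑ j, y j) - s := by ring
        rw [heq, ← mul_assoc]
      simp_rw [h1]
      rw [lintegral_mul_const _ (show Measurable fun s : ℝ =>
          K a₀ (t - ∑ j, y j - s) * K (a 0) s from
          ((measurable_K _).comp (measurable_const.sub measurable_id)).mul (measurable_K _)),
        onedim_scale _ hy, ← hCdef]
      rw [K]
      ring
    rw [lintegral_congr_ae hinner, lintegral_const_mul _
      (show Measurable fun y : Fin m → ℝ =>
        K (a₀ + a 0) (t - ∑ j, y j) * ∏ j, K (a (Fin.succ j)) (y j) from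
        ((measurable_K _).comp (measurable_const.sub hsum_meas)).mul hprod_meas)]
    apply ENNReal.mul_lt_top hC
    exact ih (a₀ + a 0) (by linarith) (fun j => a (Fin.succ j)) (fun j => ha _)
      (by rw [hsum'] at hsum; linarith) t ht

lemma cpow_abs_mul (u v : ℝ) (c : ℂ) :
    ((|u * v| : ℝ) : ℂ) ^ c = ((|u| : ℝ) : ℂ) ^ c * ((|v| : ℝ) : ℂ) ^ c := by
  rw [abs_mul, Complex.ofReal_mul, Complex.mul_cpow_ofReal_nonneg (abs_nonneg _) (abs_nonneg _)]

lemma sign_pow_mul (u v : ℝ) (n : ℕ) :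
    ((Real.sign (u * v) : ℝ) : ℂ) ^ n
      = ((Real.sign u : ℝ) : ℂ) ^ n * ((Real.sign v : ℝ) : ℂ) ^ n := by
  rw [sign_mul, Complex.ofReal_mul, mul_pow]

lemma cpow_finset_sum {z : ℂ} (hz : z ≠ 0) {ι : Type*} (s : Finset ι) (f : ι → ℂ) :
    z ^ (∑ i ∈ s, f i) = ∏ i ∈ s, z ^ f i := by
  classical
  induction s using Finset.induction with
  | empty => simp
  | insert _ _ hx ih =>
    rw [Finset.sum_insert hx, Finset.prod_insert hx, Complex.cpow_add _ _ hz, ih]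

end BetaLikeAux

/-- The beta-like integral `I(t)` in `m = n-1` variables. -/
noncomputable def betaLikeIntegral (m : ℕ) (β₀ : ℂ) (η₀ : ℕ)
    (β : Fin m → ℂ) (η : Fin m → ℕ) (t : ℝ) : ℂ :=
  ∫ x : Fin m → ℝ,
    ((|t - ∑ j, x j| : ℝ) : ℂ) ^ (β₀ - 1) * ((Real.sign (t - ∑ j, x j) : ℂ)) ^ η₀ *
      ∏ j, (((|x j| : ℝ) : ℂ) ^ (β j - 1) * ((Real.sign (x j) : ℂ)) ^ η j)

/-- Homogeneity of the beta-like integral: under the stated convergence hypotheses, the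
integral converges absolutely and `I(t) = |t|^{β₀+⋯+β_{n-1}−1} sgn(t)^{η₀+⋯+η_{n-1}} I(1)`. -/
theorem beta_like_integral_homogeneity (m : ℕ) (hm : 1 ≤ m)
    (β₀ : ℂ) (η₀ : ℕ) (β : Fin m → ℂ) (η : Fin m → ℕ)
    (hη₀ : η₀ ≤ 1) (hη : ∀ j, η j ≤ 1)
    (h₀ : 0 < β₀.re) (hβ : ∀ j, 0 < (β j).re)
    (hsum : (β₀ + ∑ j, β j).re < 1) (t : ℝ) (ht : t ≠ 0) :
    Integrable (fun x : Fin m → ℝ =>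
      ((|t - ∑ j, x j| : ℝ) : ℂ) ^ (β₀ - 1) * ((Real.sign (t - ∑ j, x j) : ℂ)) ^ η₀ *
        ∏ j, (((|x j| : ℝ) : ℂ) ^ (β j - 1) * ((Real.sign (x j) : ℂ)) ^ η j)) ∧
      betaLikeIntegral m β₀ η₀ β η t
        = ((|t| : ℝ) : ℂ) ^ (β₀ + ∑ j, β j - 1) * ((Real.sign t : ℂ)) ^ (η₀ + ∑ j, η j) *
            betaLikeIntegral m β₀ η₀ β η 1 := by
  classical
  open BetaLikeAux in
  set F : ℝ → (Fin m → ℝ) → ℂ := fun u x =>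
    ((|u - ∑ j, x j| : ℝ) : ℂ) ^ (β₀ - 1) * ((Real.sign (u - ∑ j, x j) : ℂ)) ^ η₀ *
      ∏ j, (((|x j| : ℝ) : ℂ) ^ (β j - 1) * ((Real.sign (x j) : ℂ)) ^ η j) with hF
  have hsum_meas : Measurable fun x : Fin m → ℝ => ∑ j, x j :=
    Finset.measurable_sum _ fun j _ => measurable_pi_apply j
  have hmeas : ∀ u : ℝ, Measurable (F u) := by
    intro u
    have h1 : Measurable fun x : Fin m → ℝ => u - ∑ j, x j := measurable_const.sub hsum_meas
    apply Measurable.mul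
    · apply Measurable.mul
      · exact (Complex.measurable_ofReal.comp ((continuous_abs.measurable).comp h1)).pow
          measurable_const
      · exact (Complex.measurable_ofReal.comp
          (BetaLikeAux.measurable_sign.comp h1)).pow_const η₀
    · apply Finset.measurable_prod
      intro j _
      apply Measurable.mul
      · exact (Complex.measurable_ofReal.comp
          ((continuous_abs.measurable).comp (measurable_pi_apply j))).pow measurable_const
      · exact (Complex.measurable_ofReal.comp
          (BetaLikeAux.measurable_sign.comp (measurable_pi_apply j))).pow_const (η j)
  set a₀ : ℝ := β₀.re with ha₀def
  set aa : Fin m → ℝ := fun j => (β j).re with haadef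
  have hsum' : a₀ + ∑ j, aa j < 1 := by
    have h := hsum
    rw [Complex.add_re, Complex.re_sum] at h
    exact h
  -- norm bound
  have hbound : ∀ (u : ℝ) (x : Fin m → ℝ),
      ‖F u x‖ ≤ |u - ∑ j, x j| ^ (a₀ - 1) * ∏ j, |x j| ^ (aa j - 1) := by
    intro u x
    have hA : ‖((|u - ∑ j, x j| : ℝ) : ℂ) ^ (β₀ - 1)‖ ≤ |u - ∑ j, x j| ^ (a₀ - 1) := by
      have := BetaLikeAux.norm_cpow_real_le |u - ∑ j, x j| (abs_nonneg _) (β₀ - 1)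
      simpa [Complex.sub_re, Complex.one_re] using this
    have hB : ‖((Real.sign (u - ∑ j, x j) : ℂ)) ^ η₀‖ ≤ 1 := by
      rw [norm_pow, Complex.norm_real, Real.norm_eq_abs]
      exact pow_le_one₀ (abs_nonneg _) (BetaLikeAux.abs_sign_le_one _)
    have hP : ‖∏ j, (((|x j| : ℝ) : ℂ) ^ (β j - 1) * ((Real.sign (x j) : ℂ)) ^ η j)‖
        ≤ ∏ j, |x j| ^ (aa j - 1) := by
      rw [norm_prod]
      apply Finset.prod_le_prod (fun j _ => norm_nonneg _)
      intro j _
      rw [norm_mul]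
      have hc : ‖((|x j| : ℝ) : ℂ) ^ (β j - 1)‖ ≤ |x j| ^ (aa j - 1) := by
        have := BetaLikeAux.norm_cpow_real_le |x j| (abs_nonneg _) (β j - 1)
        simpa [Complex.sub_re, Complex.one_re] using this
      have hs : ‖((Real.sign (x j) : ℂ)) ^ η j‖ ≤ 1 := by
        rw [norm_pow, Complex.norm_real, Real.norm_eq_abs]
        exact pow_le_one₀ (abs_nonneg _) (BetaLikeAux.abs_sign_le_one _)
      calc ‖((|x j| : ℝ) : ℂ) ^ (β j - 1)‖ * ‖((Real.sign (x j) : ℂ)) ^ η j‖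
          ≤ |x j| ^ (aa j - 1) * 1 :=
            mul_le_mul hc hs (norm_nonneg _) (Real.rpow_nonneg (abs_nonneg _) _)
        _ = |x j| ^ (aa j - 1) := mul_one _
    calc ‖F u x‖ = ‖((|u - ∑ j, x j| : ℝ) : ℂ) ^ (β₀ - 1)‖ *
          ‖((Real.sign (u - ∑ j, x j) : ℂ)) ^ η₀‖ *
          ‖∏ j, (((|x j| : ℝ) : ℂ) ^ (β j - 1) * ((Real.sign (x j) : ℂ)) ^ η j)‖ := by
          rw [hF]; rw [norm_mul, norm_mul]
      _ ≤ (|u - ∑ j, x j| ^ (a₀ - 1) * 1) * ∏ j, |x j| ^ (aa j - 1) := by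
          apply mul_le_mul _ hP (norm_nonneg _)
            (by positivity)
          exact mul_le_mul hA hB (norm_nonneg _) (Real.rpow_nonneg (abs_nonneg _) _)
      _ = |u - ∑ j, x j| ^ (a₀ - 1) * ∏ j, |x j| ^ (aa j - 1) := by rw [mul_one]
  -- integrability
  have hint : ∀ u : ℝ, u ≠ 0 → Integrable (F u) := by
    intro u hu
    refine ⟨(hmeas u).aestronglyMeasurable, ?_⟩
    rw [hasFiniteIntegral_iff_norm]
    calc (∫⁻ x, ENNReal.ofReal ‖F u x‖)
        ≤ ∫⁻ x : Fin m → ℝ, BetaLikeAux.K a₀ (u - ∑ j, x j) *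
            ∏ j, BetaLikeAux.K (aa j) (x j) := by
          apply lintegral_mono
          intro x
          refine le_trans (ENNReal.ofReal_le_ofReal (hbound u x)) (le_of_eq ?_)
          rw [ENNReal.ofReal_mul (Real.rpow_nonneg (abs_nonneg _) _)]
          congr 1
          rw [ENNReal.ofReal_prod_of_nonneg
            (fun j _ => Real.rpow_nonneg (abs_nonneg _) _)]
          rfl
      _ < ⊤ := BetaLikeAux.multi_finite m a₀ h₀ aa (fun j => hβ j) hsum' u hu
  refine ⟨hint t ht, ?_⟩
  -- the scaling identity
  haveI : Nonempty (Fin m) := ⟨⟨0, hm⟩⟩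
  set z : ℂ := ((|t| : ℝ) : ℂ) with hzdef
  have hz : z ≠ 0 := Complex.ofReal_ne_zero.mpr (abs_ne_zero.mpr ht)
  set c : ℂ := (z ^ (β₀ - 1) * ((Real.sign t : ℂ)) ^ η₀) *
      ∏ j, (z ^ (β j - 1) * ((Real.sign t : ℂ)) ^ η j) with hcdef
  have hpoint : ∀ x : Fin m → ℝ, F t (t • x) = c * F 1 x := by
    intro x
    have hsub : t - ∑ j, (t • x) j = t * (1 - ∑ j, x j) := by
      simp only [Pi.smul_apply, smul_eq_mul, ← Finset.mul_sum]
      ring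
    have happ : ∀ j, (t • x) j = t * x j := fun j => rfl
    rw [hF]
    simp only [happ]
    rw [show t - ∑ j, t * x j = t * (1 - ∑ j, x j) from by rw [← Finset.mul_sum]; ring]
    simp only [BetaLikeAux.cpow_abs_mul, BetaLikeAux.sign_pow_mul,
      Finset.prod_mul_distrib, hcdef, ← hzdef]
    ring
  have key := MeasureTheory.Measure.integral_comp_smul (μ := (volume : Measure (Fin m → ℝ)))
    (f := F t) t
  rw [Module.finrank_fin_fun] at key
  have habs : |(t ^ m)⁻¹| = (|t| ^ m)⁻¹ := by
    rw [abs_inv, abs_pow]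
  have hIt : (∫ x, F t x) = (|t| ^ m) • ∫ x, F t (t • x) := by
    rw [key, habs, smul_smul]
    rw [mul_inv_cancel₀ (by positivity : (|t| : ℝ) ^ m ≠ 0), one_smul]
  have hscale : (∫ x, F t (t • x)) = c * ∫ x, F 1 x := by
    simp_rw [hpoint]
    exact integral_const_mul c _
  have hc_eq : ((|t| ^ m : ℝ) : ℂ) * c
      = z ^ (β₀ + ∑ j, β j - 1) * ((Real.sign t : ℂ)) ^ (η₀ + ∑ j, η j) := by
    rw [hcdef, Finset.prod_mul_distrib, ← BetaLikeAux.cpow_finset_sum hz,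
      Finset.prod_pow_eq_pow_sum]
    have hcast : ((|t| ^ m : ℝ) : ℂ) = z ^ ((m : ℕ) : ℂ) := by
      rw [Complex.ofReal_pow, Complex.cpow_natCast]
    rw [hcast]
    have hz1 : z ^ ((m : ℕ) : ℂ) * (z ^ (β₀ - 1) * ((Real.sign t : ℂ)) ^ η₀ *
        (z ^ (∑ j, (β j - 1)) * ((Real.sign t : ℂ)) ^ (∑ j, η j)))
        = (z ^ ((m : ℕ) : ℂ) * z ^ (β₀ - 1) * z ^ (∑ j, (β j - 1))) *
          (((Real.sign t : ℂ)) ^ η₀ * ((Real.sign t : ℂ)) ^ (∑ j, η j)) := by ring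
    rw [hz1, ← Complex.cpow_add _ _ hz, ← Complex.cpow_add _ _ hz, ← pow_add]
    congr 1
    congr 1
    rw [Finset.sum_sub_distrib, Finset.sum_const, Finset.card_univ, Fintype.card_fin]
    push_cast
    ring
  calc betaLikeIntegral m β₀ η₀ β η t = ∫ x, F t x := rfl
    _ = (|t| ^ m) • (c * ∫ x, F 1 x) := by rw [hIt, hscale]
    _ = (((|t| ^ m : ℝ) : ℂ) * c) * ∫ x, F 1 x := by
        rw [Complex.real_smul]; ring
    _ = ((|t| : ℝ) : ℂ) ^ (β₀ + ∑ j, β j - 1) * ((Real.sign t : ℂ)) ^ (η₀ + ∑ j, η j) *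
          betaLikeIntegral m β₀ η₀ β η 1 := by
        rw [hc_eq, hzdef]
        rfl
end
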